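/- Suppose λ_k ‖d_k‖ → 0, ‖F_k‖ ≤ ω₁ for all k, ‖F_k - F_{k-1}‖ ≤ L λ_{k-1} ‖d_{k-1}‖, and ‖F_{k-1}‖ ≥ ξ > 0 for all k. Then β̄_k → 0, where β̄_k = max(0, ⟨F_k, y_{k-1}⟩) / max(⟨d_{k-1}, y_{k-1}⟩, ‖F_{k-1}‖²) and y_{k-1} = F_k - F_{k-1}. -/

import Mathlib

theorem stmt_11 {n : ℕ} (F d : ℕ → EuclideanSpace ℝ (Fin n)) (lam : ℕ → ℝ)
    (ω₁ L ξ : ℝ) (hω₁ : 0 < ω₁) (hL : 0 < L) (hξ : 0 < ξ)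
    (hlam : ∀ k, 0 < lam k)
    (htend : Filter.Tendsto (fun k => lam k * ‖d k‖) Filter.atTop (nhds 0))
    (hFbound : ∀ k, ‖F k‖ ≤ ω₁)
    (hLip : ∀ k ≥ 1, ‖F k - F (k - 1)‖ ≤ L * lam (k - 1) * ‖d (k - 1)‖)
    (hFlow : ∀ k ≥ 1, ξ ≤ ‖F (k - 1)‖) :
    Filter.Tendsto
      (fun k => max 0 (inner ℝ (F k) (F k - F (k - 1)) : ℝ) /
        max (inner ℝ (d (k - 1)) (F k - F (k - 1)) : ℝ) (‖F (k - 1)‖ ^ 2))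
      Filter.atTop (nhds 0) := by
  have hg : Filter.Tendsto (fun k => (ω₁ * L / ξ ^ 2) * (lam (k - 1) * ‖d (k - 1)‖))
      Filter.atTop (nhds 0) := by
    have h1 : Filter.Tendsto (fun k : ℕ => lam (k - 1) * ‖d (k - 1)‖)
        Filter.atTop (nhds 0) :=
      htend.comp (Filter.tendsto_sub_atTop_nat 1)
    simpa using h1.const_mul (ω₁ * L / ξ ^ 2)
  apply squeeze_zero' (g := fun k => (ω₁ * L / ξ ^ 2) * (lam (k - 1) * ‖d (k - 1)‖)) ?_ ?_ hg
  · filter_upwards [Filter.eventually_ge_atTop 1] with k hk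
    apply div_nonneg (le_max_left 0 _)
    exact le_trans (sq_nonneg ‖F (k-1)‖) (le_max_right _ _)
  · filter_upwards [Filter.eventually_ge_atTop 1] with k hk
    have hξ2 : (0:ℝ) < ξ ^ 2 := by positivity
    have hD : ξ ^ 2 ≤ max (inner ℝ (d (k - 1)) (F k - F (k - 1)) : ℝ) (‖F (k - 1)‖ ^ 2) :=
      le_trans (pow_le_pow_left₀ hξ.le (hFlow k hk) 2) (le_max_right _ _)
    have hN : max 0 (inner ℝ (F k) (F k - F (k - 1)) : ℝ) ≤ ω₁ * (L * lam (k-1) * ‖d (k-1)‖) := by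
      have hb : (0:ℝ) ≤ ω₁ * (L * lam (k-1) * ‖d (k-1)‖) := by have := (hlam (k-1)).le; positivity
      apply max_le hb
      calc (inner ℝ (F k) (F k - F (k - 1)) : ℝ) ≤ ‖F k‖ * ‖F k - F (k-1)‖ :=
            real_inner_le_norm _ _
        _ ≤ ω₁ * (L * lam (k-1) * ‖d (k-1)‖) :=
            mul_le_mul (hFbound k) (hLip k hk) (norm_nonneg _) hω₁.le
    calc max 0 (inner ℝ (F k) (F k - F (k - 1)) : ℝ) /
          max (inner ℝ (d (k - 1)) (F k - F (k - 1)) : ℝ) (‖F (k - 1)‖ ^ 2)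
        ≤ (ω₁ * (L * lam (k-1) * ‖d (k-1)‖)) / ξ ^ 2 :=
          div_le_div₀ (by have := (hlam (k-1)).le; positivity) hN hξ2 hD
      _ = (ω₁ * L / ξ ^ 2) * (lam (k - 1) * ‖d (k - 1)‖) := by ring
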